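/- The staircase monomial is fixed modulo I by the sign-reversing automorphism: in ℤ[x_1,…,x_n], the polynomial ∏_{i=1}^{n} x_i^{n−i} − (−1)^{n(n−1)/2} ∏_{i=1}^{n} x_i^{i−1} lies in the ideal I. Equivalently, the image of x_1^{n−1}x_2^{n−2}⋯x_{n−1} under the ring automorphism x_j ↦ −x_{n+1−j} is congruent to x_1^{n−1}x_2^{n−2}⋯x_{n−1} modulo I. -/

import Mathlib

open MvPolynomial

/-- The ideal of `ℤ[x_1,…,x_n]` generated by the symmetric polynomials of positive
degree, equivalently by the elementary symmetric polynomials `e_1, …, e_n`. -/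
noncomputable def symIdeal (n : ℕ) : Ideal (MvPolynomial (Fin n) ℤ) :=
  Ideal.span {f | ∃ k : ℕ, 0 < k ∧ k ≤ n ∧ f = MvPolynomial.esymm (Fin n) ℤ k}

open Finset PowerSeries

open MvPolynomial Finset PowerSeries

noncomputable section Aux

variable {n : ℕ}

/-- abbreviation for the ring -/
local notation "R" => MvPolynomial (Fin n) ℤ

/-- monomial with exponent function g -/
noncomputable def M (g : Fin n → ℕ) : R := ∏ i : Fin n, X i ^ g i

lemma M_mul (g₁ g₂ : Fin n → ℕ) : M g₁ * M g₂ = M (fun i => g₁ i + g₂ i) := by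
  simp [M, ← Finset.prod_mul_distrib, pow_add]

/-- elementary symmetric over a subset -/
noncomputable def E (S : Finset (Fin n)) (r : ℕ) : R := ∑ A ∈ S.powersetCard r, ∏ i ∈ A, X i

/-- generating polynomial-series ∏_{i∈S} (1 - X i t) -/
noncomputable def GE (S : Finset (Fin n)) : PowerSeries R :=
  ∏ i ∈ S, (1 - PowerSeries.C (X i) * PowerSeries.X)

/-- generating series ∏_{i∈S} 1/(1 - X i t) -/
noncomputable def GH (S : Finset (Fin n)) : PowerSeries R :=
  ∏ i ∈ S, PowerSeries.mk (fun k => (X i : R) ^ k)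

/-- complete homogeneous over a subset, as coefficient -/
noncomputable def H (S : Finset (Fin n)) (s : ℕ) : R := PowerSeries.coeff s (GH S)

lemma one_sub_mul_mk (a : R) :
    (1 - PowerSeries.C a * PowerSeries.X) * PowerSeries.mk (fun k => a ^ k) = 1 := by
  ext k
  rw [sub_mul, one_mul, map_sub, PowerSeries.coeff_one]
  rcases k with _ | k
  · simp
  · rw [mul_assoc, PowerSeries.coeff_C_mul, PowerSeries.coeff_succ_X_mul, coeff_mk, coeff_mk,
      if_neg (Nat.succ_ne_zero k)]
    ring

lemma GE_mul_GH (S : Finset (Fin n)) : GE S * GH S = 1 := by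
  rw [GE, GH, ← Finset.prod_mul_distrib]
  exact Finset.prod_eq_one fun i _ => one_sub_mul_mk (X i)

lemma coeff_GE (S : Finset (Fin n)) (b : ℕ) :
    PowerSeries.coeff b (GE S) = (-1 : R) ^ b * E S b := by
  classical
  induction S using Finset.induction generalizing b with
  | empty =>
    rcases b with _ | b
    · simp [GE, E]
    · rw [GE, Finset.prod_empty, E]
      rw [Finset.powersetCard_eq_empty.mpr (by simp)]
      simp
  | @insert a S ha ih =>
    rw [GE, Finset.prod_insert ha, ← GE, sub_mul, one_mul, map_sub, ih]
    rcases b with _ | b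
    · simp only [mul_assoc, PowerSeries.coeff_C_mul]
      rw [PowerSeries.coeff_zero_eq_constantCoeff_apply]
      simp only [map_mul, PowerSeries.constantCoeff_X, mul_zero, zero_mul, sub_zero, E]
      simp [powersetCard_zero]
    · rw [mul_assoc, PowerSeries.coeff_C_mul, PowerSeries.coeff_succ_X_mul, ih]
      rw [E, E, E, powersetCard_succ_insert ha, Finset.sum_union, Finset.sum_image]
      · simp only [pow_succ]
        rw [Finset.mul_sum]
        have : ∀ A ∈ S.powersetCard b, ∏ i ∈ insert a A, X i = (X a : R) * ∏ i ∈ A, X i := by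
          intro A hA
          rw [Finset.prod_insert]
          exact fun hc => ha (Finset.mem_powersetCard.mp hA |>.1 hc)
        rw [Finset.sum_congr rfl this, Finset.mul_sum]
        simp only [Nat.succ_eq_add_one, Nat.add_comm 1 b, ← neg_mul, ← Finset.sum_mul, Finset.sum_neg_distrib,
          ← Finset.mul_sum]
        ring
      · intro A hA B hB hAB
        have hA' := (Finset.mem_powersetCard.mp hA).1
        have hB' := (Finset.mem_powersetCard.mp hB).1
        ext x
        constructor <;> intro hx
        · have : x ∈ insert a A := Finset.mem_insert_of_mem hx
          rw [hAB] at this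
          rcases Finset.mem_insert.mp this with h | h
          · exact absurd (h ▸ hx) fun hc => ha (hA' hc)
          · exact h
        · have : x ∈ insert a B := Finset.mem_insert_of_mem hx
          rw [← hAB] at this
          rcases Finset.mem_insert.mp this with h | h
          · exact absurd (h ▸ hx) fun hc => ha (hB' hc)
          · exact h
      · rw [Finset.disjoint_left]
        intro A hA hA2
        obtain ⟨B, hB, rfl⟩ := Finset.mem_image.mp hA2
        have := (Finset.mem_powersetCard.mp hA).1
        exact ha (this (Finset.mem_insert_self a B))


lemma H_zero (S : Finset (Fin n)) : H S 0 = 1 := by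
  rw [H, PowerSeries.coeff_zero_eq_constantCoeff_apply, GH, map_prod]
  exact Finset.prod_eq_one fun i _ => by simp [PowerSeries.constantCoeff_mk]

lemma H_empty (s : ℕ) (hs : s ≠ 0) : H (∅ : Finset (Fin n)) s = 0 := by
  rw [H, GH, Finset.prod_empty, PowerSeries.coeff_one, if_neg hs]

lemma H_singleton (a : Fin n) (s : ℕ) : H {a} s = X a ^ s := by
  rw [H, GH, Finset.prod_singleton, coeff_mk]

lemma GH_eq (S U : Finset (Fin n)) (hSU : S ⊆ U) : GH S = GH U * GE (U \ S) := by
  have : GH U = GH S * GH (U \ S) := by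
    rw [GH, GH, GH, ← Finset.prod_union (Finset.disjoint_sdiff)]
    rw [Finset.union_sdiff_of_subset hSU]
  rw [this, mul_assoc, mul_comm (GH (U \ S)), GE_mul_GH, mul_one]

/-- The key identity -/
lemma Key (S U : Finset (Fin n)) (hSU : S ⊆ U) (s : ℕ) :
    H S s = ∑ p ∈ HasAntidiagonal.antidiagonal s, H U p.1 * ((-1 : R) ^ p.2 * E (U \ S) p.2) := by
  rw [H, GH_eq S U hSU, PowerSeries.coeff_mul]
  exact Finset.sum_congr rfl fun p _ => by rw [coeff_GE, H]


lemma E_zero (S : Finset (Fin n)) : E S 0 = 1 := by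
  rw [E, Finset.powersetCard_zero, Finset.sum_singleton, Finset.prod_empty]

lemma E_univ_mem (r : ℕ) (hr : 1 ≤ r) : E (Finset.univ : Finset (Fin n)) r ∈ symIdeal n := by
  rcases le_or_gt r n with h | h
  · exact Ideal.subset_span ⟨r, hr, h, rfl⟩
  · rw [E, Finset.powersetCard_eq_empty.mpr (by simpa using h), Finset.sum_empty]
    exact Ideal.zero_mem _

lemma L0 (s : ℕ) (hs : 1 ≤ s) : H (Finset.univ : Finset (Fin n)) s ∈ symIdeal n := by
  have h := Key (∅ : Finset (Fin n)) Finset.univ (Finset.empty_subset _) s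
  rw [H_empty s (by omega), Finset.sdiff_empty] at h
  have hmem : ((s, 0) : ℕ × ℕ) ∈ HasAntidiagonal.antidiagonal s := by simp
  rw [← Finset.sum_erase_add _ _ hmem, E_zero] at h
  simp only [pow_zero, one_mul, mul_one] at h
  have : H (Finset.univ : Finset (Fin n)) s
      = -∑ p ∈ (HasAntidiagonal.antidiagonal s).erase (s, 0), H Finset.univ p.1 * ((-1:R) ^ p.2 * E Finset.univ p.2) := by
    linear_combination -h
  rw [this]
  refine neg_mem (Ideal.sum_mem _ fun p hp => ?_)
  have hp2 : 1 ≤ p.2 := by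
    rcases Finset.mem_erase.mp hp with ⟨hne, hmem'⟩
    rw [HasAntidiagonal.mem_antidiagonal] at hmem'
    rcases Nat.eq_zero_or_pos p.2 with h0 | h0
    · exact absurd (by rw [Prod.ext_iff]; omega) hne
    · exact h0
  exact Ideal.mul_mem_left _ _ (Ideal.mul_mem_left _ _ (E_univ_mem p.2 hp2))

lemma L1 (S : Finset (Fin n)) (s : ℕ) (hs : 1 ≤ s) :
    H S s - (-1 : R) ^ s * E Sᶜ s ∈ symIdeal n := by
  have h := Key S Finset.univ (Finset.subset_univ _) s
  rw [← Finset.compl_eq_univ_sdiff] at h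
  have hmem : ((0, s) : ℕ × ℕ) ∈ HasAntidiagonal.antidiagonal s := by simp
  rw [← Finset.sum_erase_add _ _ hmem, H_zero, one_mul] at h
  have : H S s - (-1 : R) ^ s * E Sᶜ s
      = ∑ p ∈ (HasAntidiagonal.antidiagonal s).erase (0, s), H Finset.univ p.1 * ((-1:R) ^ p.2 * E Sᶜ p.2) := by
    linear_combination h
  rw [this]
  refine Ideal.sum_mem _ fun p hp => ?_
  have hp1 : 1 ≤ p.1 := by
    rcases Finset.mem_erase.mp hp with ⟨hne, hmem'⟩
    rw [HasAntidiagonal.mem_antidiagonal] at hmem'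
    rcases Nat.eq_zero_or_pos p.1 with h0 | h0
    · exact absurd (by rw [Prod.ext_iff]; omega) hne
    · exact h0
  exact Ideal.mul_mem_right _ _ (L0 p.1 hp1)


/-- indicator monomial -/
lemma ind_prod (B : Finset (Fin n)) :
    M (fun i => if i ∈ B then 1 else 0) = ∏ i ∈ B, X i := by
  rw [M, show (∏ i ∈ B, (X i : R)) = ∏ i ∈ Finset.univ ∩ B, (X i : R) by rw [Finset.univ_inter],
    ← Finset.prod_ite_mem Finset.univ B (fun i => (MvPolynomial.X i : R))]
  exact Finset.prod_congr rfl fun i _ => by split_ifs <;> simp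

lemma M_single (k : Fin n) (e : ℕ) :
    M (fun i => if (i : ℕ) = (k : ℕ) then e else 0) = (X k : R) ^ e := by
  rw [M]
  rw [show ((X k : R) ^ e) = ∏ i : Fin n, (if i = k then (X i : R) ^ e else 1) by
    rw [Finset.prod_ite_eq' Finset.univ k (fun i => (X i : R) ^ e)]; simp]
  refine Finset.prod_congr rfl fun i _ => ?_
  by_cases h : i = k
  · subst h; simp
  · have h' : (i : ℕ) ≠ (k : ℕ) := fun hc => h (Fin.val_injective hc)
    simp [h, h']

/-- the deep monomials -/
def uexp (k : Fin n) : Fin n → ℕ :=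
  fun i => if (i : ℕ) = (k : ℕ) then (k : ℕ) + 1 else if (k : ℕ) < (i : ℕ) then (i : ℕ) else 0

def tail (m : Fin n) : Fin n → ℕ := fun i => if (m : ℕ) < (i : ℕ) then (i : ℕ) else 0

/-- factorization lemma -/
lemma LemD (m : Fin n) (B : Finset (Fin n)) (j : Fin n) (hj : j ∈ B) (hmj : (m : ℕ) < (j : ℕ)) :
    (∏ i ∈ B, (X i : R)) * M (tail m) = M (uexp j) *
      M (fun i => (if i ∈ B ∧ i ≠ j then 1 else 0)
          + (if (m : ℕ) < (i : ℕ) ∧ (i : ℕ) < (j : ℕ) then (i : ℕ) else 0)) := by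
  rw [← ind_prod, M_mul, M_mul, M, M]
  refine Finset.prod_congr rfl fun i _ => ?_
  congr 1
  by_cases hij : i = j
  · subst hij
    simp only [uexp, tail, hj, ne_eq, not_true_eq_false, and_false, if_false, lt_self_iff_false,
      true_and]
    split_ifs <;> omega
  · have hij' : (i : ℕ) ≠ (j : ℕ) := fun hc => hij (Fin.val_injective hc)
    by_cases hiB : i ∈ B <;>
      simp only [uexp, tail, hiB, hij, ne_eq, not_false_eq_true, and_true, true_and,
        false_and, if_false, if_true] <;> split_ifs <;> omega

lemma U_mem (d : ℕ) : ∀ (k : Fin n), n - (k : ℕ) ≤ d → M (uexp k) ∈ symIdeal n := by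
  induction d with
  | zero => intro k hk; exact absurd hk (by have := k.isLt; omega)
  | succ d ih =>
    intro k hk
    have hsplit : M (uexp k) = (X k : R) ^ ((k : ℕ) + 1) * M (tail k) := by
      rw [← M_single k ((k : ℕ) + 1), M_mul]
      refine Finset.prod_congr rfl fun i _ => ?_
      congr 1
      simp only [uexp, tail]
      split_ifs <;> omega
    have hXk : (X k : R) ^ ((k : ℕ) + 1) = H {k} ((k : ℕ) + 1) := (H_singleton k _).symm
    have hL1 := L1 ({k} : Finset (Fin n)) ((k : ℕ) + 1) (by omega)
    have hdecomp : M (uexp k)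
        = (H {k} ((k : ℕ) + 1) - (-1 : R) ^ ((k : ℕ) + 1) * E ({k}ᶜ) ((k : ℕ) + 1)) * M (tail k)
          + (-1 : R) ^ ((k : ℕ) + 1) * (E ({k}ᶜ) ((k : ℕ) + 1) * M (tail k)) := by
      rw [hsplit, hXk]; ring
    rw [hdecomp]
    refine Ideal.add_mem _ (Ideal.mul_mem_right _ _ hL1) (Ideal.mul_mem_left _ _ ?_)
    rw [E, Finset.sum_mul]
    refine Ideal.sum_mem _ fun B hB => ?_
    obtain ⟨hBsub, hBcard⟩ := Finset.mem_powersetCard.mp hB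
    have hex : ∃ j ∈ B, (k : ℕ) < (j : ℕ) := by
      by_contra hcon
      push_neg at hcon
      have hsub : B ⊆ Finset.Iio k := by
        intro j hjB
        have h1 := hcon j hjB
        have h2 : j ≠ k := by
          intro hc; subst hc; exact (Finset.mem_compl.mp (hBsub hjB)) (Finset.mem_singleton_self j)
        have : (j : ℕ) ≠ (k : ℕ) := fun hc => h2 (Fin.val_injective hc)
        exact Finset.mem_Iio.mpr (by rw [Fin.lt_def]; omega)
      have := Finset.card_le_card hsub
      rw [hBcard, Fin.card_Iio] at this
      omega
    obtain ⟨j, hjB, hkj⟩ := hex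
    rw [LemD k B j hjB hkj]
    refine Ideal.mul_mem_right _ _ (ih j ?_)
    have := j.isLt
    omega

lemma b0 (m : Fin n) (s : ℕ) (hs : 1 ≤ s) :
    H (Finset.Iic m) s * M (tail m) ∈ symIdeal n := by
  have hL1 := L1 (Finset.Iic m) s hs
  have hdecomp : H (Finset.Iic m) s * M (tail m)
      = (H (Finset.Iic m) s - (-1 : R) ^ s * E ((Finset.Iic m)ᶜ) s) * M (tail m)
        + (-1 : R) ^ s * (E ((Finset.Iic m)ᶜ) s * M (tail m)) := by ring
  rw [hdecomp]
  refine Ideal.add_mem _ (Ideal.mul_mem_right _ _ hL1) (Ideal.mul_mem_left _ _ ?_)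
  rw [E, Finset.sum_mul]
  refine Ideal.sum_mem _ fun B hB => ?_
  obtain ⟨hBsub, hBcard⟩ := Finset.mem_powersetCard.mp hB
  have hBne : B.Nonempty := Finset.card_pos.mp (by omega)
  obtain ⟨j, hjB⟩ := hBne
  have hmj : (m : ℕ) < (j : ℕ) := by
    have := Finset.mem_compl.mp (hBsub hjB)
    rw [Finset.mem_Iic] at this
    have := lt_of_not_ge this
    rwa [Fin.lt_def] at this
  rw [LemD m B j hjB hmj]
  exact Ideal.mul_mem_right _ _ (U_mem n j (by omega))


lemma hEps (e : ℕ) : ((-1 : R) ^ e) * ((-1 : R) ^ e) = 1 := by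
  rw [← pow_add]; exact Even.neg_one_pow ⟨e, rfl⟩

lemma flipSign (e : ℕ) (a b : R) (h : a - (-1 : R) ^ e * b ∈ symIdeal n) :
    b - (-1 : R) ^ e * a ∈ symIdeal n := by
  have hε := hEps (n := n) e
  have heq : b - (-1 : R) ^ e * a = -((-1 : R) ^ e) * (a - (-1 : R) ^ e * b) := by
    linear_combination (-b) * hε
  rw [heq]
  exact Ideal.mul_mem_left _ _ h

/-- staircase exponents -/
def g (t : ℕ) : Fin n → ℕ := fun i => if (i : ℕ) ≤ t then t - (i : ℕ) else (i : ℕ)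

def low (m : Fin n) : Fin n → ℕ := fun i => if (i : ℕ) < (m : ℕ) then (m : ℕ) - 1 - (i : ℕ) else 0

lemma E_Iio (m : Fin n) : E (Finset.Iio m) (m : ℕ) = ∏ i ∈ Finset.Iio m, (X i : R) := by
  have hc : (Finset.Iio m).card = (m : ℕ) := Fin.card_Iio m
  rw [E, ← hc, Finset.powersetCard_self, Finset.sum_singleton]

lemma Iic_sdiff (m : Fin n) : Finset.Iic m \ {m} = Finset.Iio m := by
  ext i
  simp only [Finset.mem_sdiff, Finset.mem_Iic, Finset.mem_singleton, Finset.mem_Iio]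
  constructor
  · rintro ⟨h1, h2⟩; exact lt_of_le_of_ne h1 h2
  · intro h; exact ⟨le_of_lt h, ne_of_lt h⟩

lemma Gstep (mf : Fin n) (hm : 0 < (mf : ℕ)) :
    M (g ((mf : ℕ) - 1)) - (-1 : R) ^ (mf : ℕ) * M (g (mf : ℕ)) ∈ symIdeal n := by
  set m : ℕ := (mf : ℕ) with hmdef
  -- decomposition of the shifted staircase
  have h1 : M (g (m - 1)) = (X mf : R) ^ m * M (fun i => tail mf i + low mf i) := by
    rw [← M_single mf m, M_mul]
    refine Finset.prod_congr rfl fun i _ => ?_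
    congr 1
    simp only [g, tail, low, uexp]
    split_ifs <;> omega
  -- key identity for X mf ^ m
  have hkey : (X mf : R) ^ m = ∑ p ∈ HasAntidiagonal.antidiagonal m,
      H (Finset.Iic mf) p.1 * ((-1 : R) ^ p.2 * E (Finset.Iio mf) p.2) := by
    rw [← H_singleton mf m, Key {mf} (Finset.Iic mf) (by simp) m, Iic_sdiff]
  have hmem : ((0, m) : ℕ × ℕ) ∈ HasAntidiagonal.antidiagonal m := by simp
  rw [← Finset.sum_erase_add _ _ hmem, H_zero, one_mul] at hkey
  -- products
  have h3 : E (Finset.Iio mf) m * M (fun i => tail mf i + low mf i) = M (g m) := by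
    rw [E_Iio, ← ind_prod, M_mul]
    refine Finset.prod_congr rfl fun i _ => ?_
    congr 1
    by_cases him : i ∈ Finset.Iio mf
    · have hv : (i : ℕ) < m := by rwa [Finset.mem_Iio, Fin.lt_def] at him
      simp only [him, if_true, g, tail, low]
      split_ifs <;> omega
    · have hv : ¬ (i : ℕ) < m := by rwa [Finset.mem_Iio, Fin.lt_def] at him
      simp only [him, if_false, g, tail, low]
      split_ifs <;> omega
  have hε := hEps (n := n) m
  have h4 : M (g (m - 1)) - (-1 : R) ^ m * M (g m)
      = (∑ p ∈ (HasAntidiagonal.antidiagonal m).erase (0, m),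
          H (Finset.Iic mf) p.1 * ((-1 : R) ^ p.2 * E (Finset.Iio mf) p.2))
        * M (fun i => tail mf i + low mf i) := by
    linear_combination h1 + M (fun i => tail mf i + low mf i) * hkey + (-1 : R) ^ m * h3
  rw [h4, Finset.sum_mul]
  refine Ideal.sum_mem _ fun p hp => ?_
  have hp1 : 1 ≤ p.1 := by
    rcases Finset.mem_erase.mp hp with ⟨hne, hmem'⟩
    rw [HasAntidiagonal.mem_antidiagonal] at hmem'
    rcases Nat.eq_zero_or_pos p.1 with h0 | h0
    · exact absurd (by rw [Prod.ext_iff]; omega) hne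
    · exact h0
  have hsplit : H (Finset.Iic mf) p.1 * ((-1 : R) ^ p.2 * E (Finset.Iio mf) p.2)
        * M (fun i => tail mf i + low mf i)
      = (H (Finset.Iic mf) p.1 * M (tail mf))
        * (((-1 : R) ^ p.2 * E (Finset.Iio mf) p.2) * M (low mf)) := by
    rw [show M (fun i => tail mf i + low mf i) = M (tail mf) * M (low mf) from (M_mul _ _).symm]
    ring
  rw [hsplit]
  exact Ideal.mul_mem_right _ _ (b0 mf p.1 hp1)

lemma chain : ∀ m : ℕ, m < n → M (g m) - (-1 : R) ^ (m * (m + 1) / 2) * M (g 0) ∈ symIdeal n := by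
  intro m
  induction m with
  | zero => intro _; rw [Nat.zero_mul, Nat.zero_div, pow_zero, one_mul, sub_self]; exact Ideal.zero_mem _
  | succ m ih =>
    intro h
    have hstep := Gstep ⟨m + 1, h⟩ (by simp)
    have hflip := flipSign _ _ _ hstep
    simp only [show ((⟨m + 1, h⟩ : Fin n) : ℕ) = m + 1 from rfl, Nat.add_sub_cancel] at hflip
    have ih' := ih (by omega)
    have hsign : (m + 1) * (m + 2) / 2 = m * (m + 1) / 2 + (m + 1) := by
      have h2 : (m + 1) * (m + 2) = m * (m + 1) + 2 * (m + 1) := by ring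
      omega
    have key : M (g (m + 1)) - (-1 : R) ^ (m * (m + 1) / 2) * (-1 : R) ^ (m + 1) * M (g 0)
        ∈ symIdeal n := by
      have h3 : M (g (m + 1)) - (-1 : R) ^ (m * (m + 1) / 2) * (-1 : R) ^ (m + 1) * M (g 0)
          = (M (g (m + 1)) - (-1 : R) ^ (m + 1) * M (g m))
            + (-1 : R) ^ (m + 1) * (M (g m) - (-1 : R) ^ (m * (m + 1) / 2) * M (g 0)) := by
        ring
      rw [h3]
      exact Ideal.add_mem _ hflip (Ideal.mul_mem_left _ _ ih')
    rw [show m + 1 + 1 = m + 2 from rfl, hsign, pow_add]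
    exact key
end Aux

/-- the staircase monomial is fixed modulo `I` by the sign-reversing
automorphism: `∏_{i=1}^n x_i^{n-i} - (-1)^{n(n-1)/2} ∏_{i=1}^n x_i^{i-1} ∈ I`
(0-indexed: variable `X i` is `x_{i+1}`). -/
theorem stmt5 (n : ℕ) (hn : 2 ≤ n) :
    (∏ i : Fin n, (X i : MvPolynomial (Fin n) ℤ) ^ (n - 1 - (i : ℕ))) -
      (-1 : MvPolynomial (Fin n) ℤ) ^ (n * (n - 1) / 2) * ∏ i : Fin n, X i ^ (i : ℕ)
      ∈ symIdeal n := by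
  have h := chain (n := n) (n - 1) (by omega)
  have e1 : M (g (n - 1)) = ∏ i : Fin n, (X i : MvPolynomial (Fin n) ℤ) ^ (n - 1 - (i : ℕ)) := by
    refine Finset.prod_congr rfl fun i _ => ?_
    have := i.isLt
    congr 1
    simp only [g]
    split_ifs <;> omega
  have e2 : M (g 0) = ∏ i : Fin n, (X i : MvPolynomial (Fin n) ℤ) ^ (i : ℕ) := by
    refine Finset.prod_congr rfl fun i _ => ?_
    congr 1
    simp only [g]
    split_ifs <;> omega
  have hsign : (n - 1) * (n - 1 + 1) / 2 = n * (n - 1) / 2 := by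
    rw [Nat.sub_add_cancel (by omega), Nat.mul_comm]
  rw [e1, e2, hsign] at h
  exact h
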